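/- Let the activation satisfy |σ(x)| ≤ |x| for all x. Suppose a network satisfies approximate interpolation ‖Z_L − Y‖_F ≤ ε1 with ε1 < s_K(Y), and has bounded parameter norm ‖θ‖₂² ≤ LK + c. Then the product of the linear layers satisfies κ(W_{L:L1+1}) ≤ exp((1/2)(c + L1·K·log K − 2K·log((s_K(Y) − ε1)/‖X‖_op))). -/

import Mathlib

open Matrix Finset Real

/-- Frobenius norm of a real matrix. -/
noncomputable def frobNorm {m n : ℕ} (A : Matrix (Fin m) (Fin n) ℝ) : ℝ :=
  Real.sqrt (∑ i, ∑ j, (A i j) ^ 2)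

/-- Operator (spectral) norm of a real matrix. -/
noncomputable def opNorm {m n : ℕ} (A : Matrix (Fin m) (Fin n) ℝ) : ℝ :=
  sSup {x : ℝ | ∃ v : Fin n → ℝ, (∑ i, v i ^ 2) ≤ 1 ∧ x = Real.sqrt (∑ i, (A.mulVec v i) ^ 2)}

theorem Matrix.isHermitian_transpose_mul_self {m n : ℕ} (A : Matrix (Fin m) (Fin n) ℝ) :
    (Aᵀ * A).IsHermitian :=
  Matrix.isHermitian_iff_isSymm.mpr (by simp [Matrix.IsSymm, Matrix.transpose_mul])

/-- The singular values of a real matrix, in non-increasing order (indexed by columns). -/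
noncomputable def svals {m n : ℕ} (A : Matrix (Fin m) (Fin n) ℝ) : Fin n → ℝ := fun i =>
  Real.sqrt ((Matrix.isHermitian_transpose_mul_self A).eigenvalues
    (Tuple.sort ((Matrix.isHermitian_transpose_mul_self A).eigenvalues) i.rev))

/-- `sval A k` is the `k`-th largest singular value of `A` (1-indexed). -/
noncomputable def sval {m n : ℕ} (A : Matrix (Fin m) (Fin n) ℝ) (k : ℕ) : ℝ :=
  if h : k - 1 < n then svals A ⟨k - 1, h⟩ else 0

/-- Smallest singular value of a (possibly rectangular) matrix. -/
noncomputable def smin {m n : ℕ} (A : Matrix (Fin m) (Fin n) ℝ) : ℝ :=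
  sval A (min m n)

/-- Condition number: the ratio between the largest and the smallest *nonzero*
singular values, i.e. the supremum of ratios of nonzero singular values. -/
noncomputable def kappa {m n : ℕ} (A : Matrix (Fin m) (Fin n) ℝ) : ℝ :=
  sSup {x : ℝ | ∃ i j : Fin n, svals A i ≠ 0 ∧ svals A j ≠ 0 ∧ x = svals A i / svals A j}

namespace SP

open scoped RealInnerProductSpace

/-- view a plain vector as an element of Euclidean space -/
def EN {k : ℕ} (v : Fin k → ℝ) : EuclideanSpace ℝ (Fin k) := WithLp.toLp 2 v

lemma EN_zero {k : ℕ} : EN (0 : Fin k → ℝ) = 0 := rfl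

lemma EN_smul {k : ℕ} (c : ℝ) (v : Fin k → ℝ) : EN (c • v) = c • EN v := rfl

lemma norm_EN {k : ℕ} (v : Fin k → ℝ) : ‖EN v‖ = Real.sqrt (∑ i, v i ^ 2) := by
  rw [EuclideanSpace.norm_eq]
  congr 1
  refine Finset.sum_congr rfl fun i _ => ?_
  rw [Real.norm_eq_abs, sq_abs]; rfl

lemma normsq_EN {k : ℕ} (v : Fin k → ℝ) : ‖EN v‖ ^ 2 = ∑ i, v i ^ 2 := by
  rw [norm_EN, Real.sq_sqrt]
  exact Finset.sum_nonneg fun i _ => sq_nonneg _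

lemma inner_EN {k : ℕ} (u v : Fin k → ℝ) : ⟪EN u, EN v⟫ = ∑ i, u i * v i := by
  rw [PiLp.inner_apply]
  simp [EN, mul_comm]

lemma dotProduct_eq_sum {k : ℕ} (u v : Fin k → ℝ) : u ⬝ᵥ v = ∑ i, u i * v i := rfl

lemma dotProduct_self_eq_sum_sq {k : ℕ} (v : Fin k → ℝ) : v ⬝ᵥ v = ∑ i, v i ^ 2 := by
  rw [dotProduct_eq_sum]; exact Finset.sum_congr rfl fun i _ => (sq (v i)).symm ▸ (pow_two (v i)).symm

lemma frobNorm_nonneg {m n : ℕ} (A : Matrix (Fin m) (Fin n) ℝ) : 0 ≤ frobNorm A :=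
  Real.sqrt_nonneg _

lemma frobNorm_sq {m n : ℕ} (A : Matrix (Fin m) (Fin n) ℝ) :
    frobNorm A ^ 2 = ∑ i, ∑ j, (A i j) ^ 2 := by
  rw [frobNorm, Real.sq_sqrt]
  exact Finset.sum_nonneg fun i _ => Finset.sum_nonneg fun j _ => sq_nonneg _

lemma frobNorm_eq_zero {m n : ℕ} {A : Matrix (Fin m) (Fin n) ℝ} (h : frobNorm A = 0) :
    A = 0 := by
  have h2 : ∑ i, ∑ j, (A i j) ^ 2 = 0 := by
    have := frobNorm_sq A
    rw [h] at this
    simpa using this.symm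
  ext i j
  have hi := (Finset.sum_eq_zero_iff_of_nonneg (fun i _ => Finset.sum_nonneg fun j _ => sq_nonneg (A i j))).1 h2 i (Finset.mem_univ i)
  have hj := (Finset.sum_eq_zero_iff_of_nonneg (fun j _ => sq_nonneg (A i j))).1 hi j (Finset.mem_univ j)
  simpa using pow_eq_zero_iff (n := 2) (by norm_num) |>.1 hj

/-- squared version of the action bound by the Frobenius norm -/
lemma normsq_mulVec_le_frob {m n : ℕ} (A : Matrix (Fin m) (Fin n) ℝ) (v : Fin n → ℝ) :
    ∑ j, ((A *ᵥ v) j) ^ 2 ≤ frobNorm A ^ 2 * ∑ i, v i ^ 2 := by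
  rw [frobNorm_sq, Finset.sum_mul]
  refine Finset.sum_le_sum fun j _ => ?_
  have : (A *ᵥ v) j = ∑ i, A j i * v i := rfl
  rw [this]
  exact Finset.sum_mul_sq_le_sq_mul_sq Finset.univ _ _

lemma norm_mulVec_le_frob {m n : ℕ} (A : Matrix (Fin m) (Fin n) ℝ) (v : Fin n → ℝ) :
    ‖EN (A *ᵥ v)‖ ≤ frobNorm A * ‖EN v‖ := by
  have h0 : 0 ≤ frobNorm A * ‖EN v‖ := mul_nonneg (frobNorm_nonneg A) (norm_nonneg _)
  have := normsq_mulVec_le_frob A v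
  rw [← normsq_EN, ← normsq_EN] at this
  calc ‖EN (A *ᵥ v)‖ = Real.sqrt (‖EN (A *ᵥ v)‖ ^ 2) := (Real.sqrt_sq (norm_nonneg _)).symm
    _ ≤ Real.sqrt (frobNorm A ^ 2 * ‖EN v‖ ^ 2) := Real.sqrt_le_sqrt this
    _ = frobNorm A * ‖EN v‖ := by
        rw [← mul_pow, Real.sqrt_sq h0]

end SP
section PartB
open scoped Matrix.Norms.L2Operator
namespace SP

lemma opNorm_set_nonempty {m n : ℕ} (A : Matrix (Fin m) (Fin n) ℝ) :
    (0:ℝ) ∈ {x : ℝ | ∃ v : Fin n → ℝ, (∑ i, v i ^ 2) ≤ 1 ∧ x = Real.sqrt (∑ i, (A.mulVec v i) ^ 2)} := by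
  refine ⟨0, by simp, ?_⟩
  simp [Matrix.mulVec_zero]

lemma opNorm_set_bddAbove {m n : ℕ} (A : Matrix (Fin m) (Fin n) ℝ) :
    BddAbove {x : ℝ | ∃ v : Fin n → ℝ, (∑ i, v i ^ 2) ≤ 1 ∧ x = Real.sqrt (∑ i, (A.mulVec v i) ^ 2)} := by
  refine ⟨frobNorm A, fun x hx => ?_⟩
  obtain ⟨v, hv, rfl⟩ := hx
  have h := norm_mulVec_le_frob A v
  rw [norm_EN, norm_EN] at h
  have hv1 : Real.sqrt (∑ i, v i ^ 2) ≤ 1 := by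
    rw [show (1:ℝ) = Real.sqrt 1 by simp]
    exact Real.sqrt_le_sqrt hv
  calc Real.sqrt (∑ i, (A.mulVec v i) ^ 2) ≤ frobNorm A * Real.sqrt (∑ i, v i ^ 2) := h
    _ ≤ frobNorm A * 1 := by
        exact mul_le_mul_of_nonneg_left hv1 (frobNorm_nonneg A)
    _ = frobNorm A := mul_one _

lemma opNorm_nonneg {m n : ℕ} (A : Matrix (Fin m) (Fin n) ℝ) : 0 ≤ opNorm A :=
  le_csSup (opNorm_set_bddAbove A) (opNorm_set_nonempty A)

lemma norm_mulVec_le_opNorm {m n : ℕ} (A : Matrix (Fin m) (Fin n) ℝ) (v : Fin n → ℝ) :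
    ‖EN (A *ᵥ v)‖ ≤ opNorm A * ‖EN v‖ := by
  rcases eq_or_ne (EN v) 0 with hv | hv
  · have hv0 : v = 0 := congrArg WithLp.ofLp hv
    subst hv0
    simp [Matrix.mulVec_zero, EN_zero]
  · have hnv : (0:ℝ) < ‖EN v‖ := norm_pos_iff.2 hv
    set u : Fin n → ℝ := (‖EN v‖)⁻¹ • v with hu
    have husq : ∑ i, u i ^ 2 ≤ 1 := by
      have : ‖EN u‖ ^ 2 = ((‖EN v‖)⁻¹ * ‖EN v‖)^2 := by
        rw [hu, EN_smul, norm_smul, Real.norm_eq_abs, abs_of_nonneg (inv_nonneg.2 hnv.le), mul_pow]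
      rw [← normsq_EN, this, inv_mul_cancel₀ hnv.ne']
      norm_num
    have hmem : Real.sqrt (∑ i, (A.mulVec u i) ^ 2) ≤ opNorm A :=
      le_csSup (opNorm_set_bddAbove A) ⟨u, husq, rfl⟩
    have hAu : A *ᵥ u = (‖EN v‖)⁻¹ • (A *ᵥ v) := by
      rw [hu, Matrix.mulVec_smul]
    have : ‖EN (A *ᵥ u)‖ = (‖EN v‖)⁻¹ * ‖EN (A *ᵥ v)‖ := by
      rw [hAu, EN_smul, norm_smul, Real.norm_eq_abs, abs_of_nonneg (inv_nonneg.2 hnv.le)]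
    rw [← norm_EN] at hmem
    rw [this] at hmem
    calc ‖EN (A *ᵥ v)‖ = ‖EN v‖ * ((‖EN v‖)⁻¹ * ‖EN (A *ᵥ v)‖) := by
          field_simp
    _ ≤ ‖EN v‖ * opNorm A := mul_le_mul_of_nonneg_left hmem hnv.le
    _ = opNorm A * ‖EN v‖ := mul_comm _ _

lemma opNorm_eq_l2 {m n : ℕ} (A : Matrix (Fin m) (Fin n) ℝ) : opNorm A = ‖A‖ := by
  apply le_antisymm
  · apply Real.sSup_le _ (norm_nonneg A)
    rintro x ⟨v, hv, rfl⟩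
    have h := Matrix.l2_opNorm_mulVec A (EN v)
    have hv1 : ‖EN v‖ ≤ 1 := by
      rw [norm_EN, show (1:ℝ) = Real.sqrt 1 by simp]
      exact Real.sqrt_le_sqrt hv
    have h2 : ‖(EuclideanSpace.equiv (Fin m) ℝ).symm (A *ᵥ (EN v))‖ = Real.sqrt (∑ i, (A.mulVec v i) ^ 2) := by
      rw [← norm_EN]; rfl
    calc Real.sqrt (∑ i, (A.mulVec v i) ^ 2) = ‖(EuclideanSpace.equiv (Fin m) ℝ).symm (A *ᵥ (EN v))‖ := h2.symm
      _ ≤ ‖A‖ * ‖EN v‖ := h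
      _ ≤ ‖A‖ * 1 := mul_le_mul_of_nonneg_left hv1 (norm_nonneg A)
      _ = ‖A‖ := mul_one _
  · rw [Matrix.l2_opNorm_def]
    apply ContinuousLinearMap.opNorm_le_bound _ (opNorm_nonneg A)
    intro x
    exact norm_mulVec_le_opNorm A x

lemma conjTranspose_eq_transpose_real {m n : ℕ} (A : Matrix (Fin m) (Fin n) ℝ) : Aᴴ = Aᵀ := by
  ext i j; simp [Matrix.conjTranspose_apply]

lemma opNorm_transpose {m n : ℕ} (A : Matrix (Fin m) (Fin n) ℝ) : opNorm Aᵀ = opNorm A := by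
  rw [opNorm_eq_l2, opNorm_eq_l2, ← conjTranspose_eq_transpose_real, Matrix.l2_opNorm_conjTranspose]

lemma norm_vecMul_le_opNorm {m n : ℕ} (A : Matrix (Fin m) (Fin n) ℝ) (v : Fin m → ℝ) :
    ‖EN (v ᵥ* A)‖ ≤ opNorm A * ‖EN v‖ := by
  have h : v ᵥ* A = Aᵀ *ᵥ v := by
    rw [← Matrix.vecMul_transpose, Matrix.transpose_transpose]
  rw [h, ← opNorm_transpose]
  exact norm_mulVec_le_opNorm Aᵀ v

lemma frobNorm_mul_le {m n p : ℕ} (A : Matrix (Fin m) (Fin n) ℝ) (B : Matrix (Fin n) (Fin p) ℝ) :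
    frobNorm (A * B) ≤ frobNorm A * frobNorm B := by
  have hsq : frobNorm (A * B) ^ 2 ≤ (frobNorm A * frobNorm B) ^ 2 := by
    rw [mul_pow, frobNorm_sq, frobNorm_sq, frobNorm_sq, Finset.sum_mul]
    refine Finset.sum_le_sum fun i _ => ?_
    calc ∑ j, ((A * B) i j) ^ 2
        ≤ ∑ j, (∑ k, (A i k)^2) * (∑ k, (B k j)^2) := by
          refine Finset.sum_le_sum fun j _ => ?_
          rw [Matrix.mul_apply]
          exact Finset.sum_mul_sq_le_sq_mul_sq Finset.univ _ _
      _ = (∑ k, (A i k)^2) * ∑ j, ∑ k, (B k j)^2 := by rw [Finset.mul_sum]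
      _ = (∑ k, (A i k)^2) * ∑ k, ∑ j, (B k j)^2 := by rw [Finset.sum_comm]
  have h1 : 0 ≤ frobNorm A * frobNorm B := mul_nonneg (frobNorm_nonneg A) (frobNorm_nonneg B)
  nlinarith [frobNorm_nonneg (A * B)]

lemma frobNorm_mul_opNorm_le {m n p : ℕ} (A : Matrix (Fin m) (Fin n) ℝ) (B : Matrix (Fin n) (Fin p) ℝ) :
    frobNorm (A * B) ≤ frobNorm A * opNorm B := by
  have hsq : frobNorm (A * B) ^ 2 ≤ (frobNorm A * opNorm B) ^ 2 := by
    rw [mul_pow, frobNorm_sq, frobNorm_sq, Finset.sum_mul]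
    refine Finset.sum_le_sum fun i _ => ?_
    have hrow : ∀ j, (A * B) i j = ((fun k => A i k) ᵥ* B) j := by
      intro j; rw [Matrix.mul_apply]; rfl
    have h := norm_vecMul_le_opNorm B (fun k => A i k)
    have h2 : ‖EN ((fun k => A i k) ᵥ* B)‖^2 ≤ (opNorm B * ‖EN (fun k => A i k)‖)^2 :=
      pow_le_pow_left₀ (norm_nonneg _) h 2
    rw [normsq_EN] at h2
    calc ∑ j, ((A * B) i j)^2 = ∑ j, (((fun k => A i k) ᵥ* B) j)^2 := by
          refine Finset.sum_congr rfl fun j _ => by rw [hrow j]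
      _ ≤ (opNorm B * ‖EN (fun k => A i k)‖)^2 := h2
      _ = (∑ k, (A i k)^2) * opNorm B^2 := by
          rw [mul_pow, normsq_EN]; ring
  have h1 : 0 ≤ frobNorm A * opNorm B := mul_nonneg (frobNorm_nonneg A) (opNorm_nonneg B)
  nlinarith [frobNorm_nonneg (A * B)]

lemma frobNorm_map_le {m n : ℕ} (A : Matrix (Fin m) (Fin n) ℝ) (σ : ℝ → ℝ)
    (hσ : ∀ x, |σ x| ≤ |x|) : frobNorm (A.map σ) ≤ frobNorm A := by
  apply Real.sqrt_le_sqrt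
  refine Finset.sum_le_sum fun i _ => Finset.sum_le_sum fun j _ => ?_
  have : (A.map σ) i j = σ (A i j) := rfl
  rw [this, ← sq_abs (σ (A i j)), ← sq_abs (A i j)]
  exact pow_le_pow_left₀ (abs_nonneg _) (hσ _) 2

lemma frobNorm_sq_eq_trace {m n : ℕ} (A : Matrix (Fin m) (Fin n) ℝ) :
    Matrix.trace (A * Aᴴ) = frobNorm A ^ 2 := by
  rw [frobNorm_sq, Matrix.trace]
  refine Finset.sum_congr rfl fun i _ => ?_
  simp [Matrix.diag, Matrix.mul_apply, Matrix.conjTranspose_apply, pow_two]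

end SP
end PartB
section PartC
namespace SP
open scoped RealInnerProductSpace

variable {m n : ℕ}

/-- the Hermitian matrix `Aᴴ * A` -/
lemma hermH (A : Matrix (Fin m) (Fin n) ℝ) : (Aᴴ * A).IsHermitian :=
  Matrix.isHermitian_transpose_mul_self A

/-- sorted-position permutation: `posPerm A i` is the index of the `i`-th largest eigenvalue. -/
noncomputable def posPerm (A : Matrix (Fin m) (Fin n) ℝ) : Equiv.Perm (Fin n) :=
  (Fin.revPerm).trans (Tuple.sort ((Matrix.isHermitian_transpose_mul_self A).eigenvalues))

/-- eigenvalues of `Aᴴ * A` in non-increasing order -/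
noncomputable def sEig (A : Matrix (Fin m) (Fin n) ℝ) : Fin n → ℝ := fun i =>
  (Matrix.isHermitian_transpose_mul_self A).eigenvalues (posPerm A i)

lemma svals_eq_sqrt_sEig (A : Matrix (Fin m) (Fin n) ℝ) (i : Fin n) :
    svals A i = Real.sqrt (sEig A i) := rfl

lemma posSemidef_H (A : Matrix (Fin m) (Fin n) ℝ) : (Aᴴ * A).PosSemidef :=
  Matrix.posSemidef_conjTranspose_mul_self A

lemma sEig_nonneg (A : Matrix (Fin m) (Fin n) ℝ) (i : Fin n) : 0 ≤ sEig A i :=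
  (posSemidef_H A).eigenvalues_nonneg _

lemma sEig_antitone (A : Matrix (Fin m) (Fin n) ℝ) : Antitone (sEig A) := by
  intro i j hij
  have := Tuple.monotone_sort ((Matrix.isHermitian_transpose_mul_self A).eigenvalues)
  exact this (Fin.rev_le_rev.2 hij)

lemma svals_antitone (A : Matrix (Fin m) (Fin n) ℝ) : Antitone (svals A) := fun i j hij =>
  Real.sqrt_le_sqrt (sEig_antitone A hij)

lemma svals_nonneg (A : Matrix (Fin m) (Fin n) ℝ) (i : Fin n) : 0 ≤ svals A i :=
  Real.sqrt_nonneg _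

lemma sq_svals (A : Matrix (Fin m) (Fin n) ℝ) (i : Fin n) : svals A i ^ 2 = sEig A i := by
  rw [svals_eq_sqrt_sEig, Real.sq_sqrt (sEig_nonneg A i)]

lemma sEig_pos_of_svals_ne_zero {A : Matrix (Fin m) (Fin n) ℝ} {i : Fin n}
    (h : svals A i ≠ 0) : 0 < sEig A i := by
  rcases lt_or_eq_of_le (sEig_nonneg A i) with h1 | h1
  · exact h1
  · exact absurd (by rw [svals_eq_sqrt_sEig, ← h1, Real.sqrt_zero]) h

/-- the orthonormal eigenbasis, indexed by sorted position -/
noncomputable def sBasis (A : Matrix (Fin m) (Fin n) ℝ) (i : Fin n) :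
    EuclideanSpace ℝ (Fin n) :=
  (Matrix.isHermitian_transpose_mul_self A).eigenvectorBasis (posPerm A i)

lemma sBasis_orthonormal (A : Matrix (Fin m) (Fin n) ℝ) : Orthonormal ℝ (sBasis A) :=
  ((Matrix.isHermitian_transpose_mul_self A).eigenvectorBasis.orthonormal).comp
    (posPerm A) (posPerm A).injective

lemma mulVec_sBasis (A : Matrix (Fin m) (Fin n) ℝ) (i : Fin n) :
    (Aᴴ * A) *ᵥ (sBasis A i : Fin n → ℝ) = sEig A i • (sBasis A i : Fin n → ℝ) :=
  (Matrix.isHermitian_transpose_mul_self A).mulVec_eigenvectorBasis (posPerm A i)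

/-- coefficients of `v` in the sorted eigenbasis -/
noncomputable def sCoef (A : Matrix (Fin m) (Fin n) ℝ) (v : Fin n → ℝ) (i : Fin n) : ℝ :=
  ⟪sBasis A i, EN v⟫

lemma EN_eq_sum_sCoef (A : Matrix (Fin m) (Fin n) ℝ) (v : Fin n → ℝ) :
    EN v = ∑ i, sCoef A v i • sBasis A i := by
  have h := (Matrix.isHermitian_transpose_mul_self A).eigenvectorBasis.sum_repr (EN v)
  have h2 : ∀ j, (Matrix.isHermitian_transpose_mul_self A).eigenvectorBasis.repr (EN v) j
      = ⟪(Matrix.isHermitian_transpose_mul_self A).eigenvectorBasis j, EN v⟫ := fun j =>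
    OrthonormalBasis.repr_apply_apply _ _ _
  calc EN v = ∑ j, (Matrix.isHermitian_transpose_mul_self A).eigenvectorBasis.repr (EN v) j
      • (Matrix.isHermitian_transpose_mul_self A).eigenvectorBasis j := h.symm
    _ = ∑ j, ⟪(Matrix.isHermitian_transpose_mul_self A).eigenvectorBasis j, EN v⟫
      • (Matrix.isHermitian_transpose_mul_self A).eigenvectorBasis j := by
        refine Finset.sum_congr rfl fun j _ => by rw [h2 j]
    _ = ∑ i, ⟪(Matrix.isHermitian_transpose_mul_self A).eigenvectorBasis (posPerm A i), EN v⟫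
      • (Matrix.isHermitian_transpose_mul_self A).eigenvectorBasis (posPerm A i) :=
        (Equiv.sum_comp (posPerm A) _).symm
    _ = ∑ i, sCoef A v i • sBasis A i := rfl

/-- Parseval -/
lemma normsq_eq_sum_sCoef (A : Matrix (Fin m) (Fin n) ℝ) (v : Fin n → ℝ) :
    ∑ i, v i ^ 2 = ∑ i, (sCoef A v i) ^ 2 := by
  have h := EN_eq_sum_sCoef A v
  calc ∑ i, v i ^ 2 = ‖EN v‖ ^ 2 := (normsq_EN v).symm
    _ = ⟪EN v, EN v⟫ := (real_inner_self_eq_norm_sq _).symm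
    _ = ∑ i, (sCoef A v i) ^ 2 := by
        nth_rewrite 1 [h]
        rw [sum_inner]
        refine Finset.sum_congr rfl fun i _ => ?_
        have hri : ⟪sBasis A i, EN v⟫ = sCoef A v i := rfl
        rw [real_inner_smul_left, hri, pow_two]

/-- quadratic form expansion -/
lemma quad_eq_sum_sCoef (A : Matrix (Fin m) (Fin n) ℝ) (v : Fin n → ℝ) :
    ∑ j, ((A *ᵥ v) j) ^ 2 = ∑ i, sEig A i * (sCoef A v i) ^ 2 := by
  have hdot : ∑ j, ((A *ᵥ v) j) ^ 2 = v ⬝ᵥ ((Aᴴ * A) *ᵥ v) := by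
    rw [← Matrix.mulVec_mulVec, Matrix.dotProduct_mulVec v Aᴴ (A *ᵥ v)]
    have hAv : v ᵥ* Aᴴ = A *ᵥ v := by
      rw [conjTranspose_eq_transpose_real, ← Matrix.vecMul_transpose]
    rw [hAv, dotProduct_self_eq_sum_sq]
  rw [hdot]
  set c : Fin n → ℝ := sCoef A v with hc
  have hv : EN v = ∑ i, c i • sBasis A i := EN_eq_sum_sCoef A v
  have hv' : v = (fun j => (∑ i, c i • sBasis A i : EuclideanSpace ℝ (Fin n)) j) := by
    funext j
    exact congrFun (congrArg (fun x : EuclideanSpace ℝ (Fin n) => (x : Fin n → ℝ)) hv) j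
  have hHv : EN ((Aᴴ * A) *ᵥ v) = ∑ i, (c i * sEig A i) • sBasis A i := by
    show WithLp.toLp 2 ((Aᴴ * A) *ᵥ v : Fin n → ℝ)
        = WithLp.toLp 2 ((∑ i, (c i * sEig A i) • sBasis A i : EuclideanSpace ℝ (Fin n)) : Fin n → ℝ)
    congr 1
    have hlin : (Aᴴ * A) *ᵥ v = (Aᴴ * A).mulVecLin (∑ i, c i • (sBasis A i : Fin n → ℝ)) := by
      rw [hv']; simp only [WithLp.ofLp_sum, WithLp.ofLp_smul]; rfl
    rw [hlin, map_sum]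
    have hterm : ∀ i, (Aᴴ * A).mulVecLin (c i • (sBasis A i : Fin n → ℝ))
        = (c i * sEig A i) • (sBasis A i : Fin n → ℝ) := by
      intro i
      rw [LinearMap.map_smul]
      have h2 : (Aᴴ * A).mulVecLin (sBasis A i : Fin n → ℝ) = sEig A i • (sBasis A i : Fin n → ℝ) :=
        mulVec_sBasis A i
      rw [h2, smul_smul, mul_comm]
    rw [Finset.sum_congr rfl fun i _ => hterm i]
    simp only [WithLp.ofLp_sum, WithLp.ofLp_smul]
  have hinner : v ⬝ᵥ ((Aᴴ * A) *ᵥ v) = ⟪EN v, EN ((Aᴴ * A) *ᵥ v)⟫ := by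
    rw [inner_EN, dotProduct_eq_sum]
  rw [hinner, hHv, hv, sum_inner]
  refine Finset.sum_congr rfl fun i _ => ?_
  rw [real_inner_smul_left, (sBasis_orthonormal A).inner_right_fintype
    (fun j => c j * sEig A j) i]
  ring

end SP
end PartC
section PartD
namespace SP
open scoped RealInnerProductSpace
open Module

variable {m n : ℕ}

lemma orth_span {E : Type*} [NormedAddCommGroup E] [InnerProductSpace ℝ E]
    {ι : Type*} {b : ι → E} (hb : Orthonormal ℝ b) {S : Set ι} {j : ι} (hj : j ∉ S)
    {v : E} (hv : v ∈ Submodule.span ℝ (b '' S)) : ⟪b j, v⟫ = 0 := by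
  induction hv using Submodule.span_induction with
  | mem x hx =>
      obtain ⟨s, hs, rfl⟩ := hx
      have hne : j ≠ s := fun h => hj (h ▸ hs)
      exact hb.2 hne
  | zero => exact inner_zero_right _
  | add x y _ _ hx hy => rw [inner_add_right, hx, hy, add_zero]
  | smul a x _ hx => rw [real_inner_smul_right, hx, mul_zero]

lemma span_finrank {E : Type*} [NormedAddCommGroup E] [InnerProductSpace ℝ E]
    {ι : Type*} {b : ι → E} (hb : Orthonormal ℝ b) (S : Finset ι) :
    finrank ℝ (Submodule.span ℝ (b '' (S : Set ι))) = S.card := by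
  have himg : b '' (S : Set ι) = Set.range (fun s : {x // x ∈ S} => b s) := by
    rw [Set.image_eq_range]; rfl
  rw [himg]
  have hli : LinearIndependent ℝ (fun s : {x // x ∈ S} => b s) :=
    (hb.comp Subtype.val Subtype.val_injective).linearIndependent
  rw [finrank_span_eq_card hli]
  exact Fintype.card_coe S

lemma exists_ne_zero_mem_inf {E : Type*} [NormedAddCommGroup E] [InnerProductSpace ℝ E]
    [FiniteDimensional ℝ E] (W T : Submodule ℝ E)
    (h : finrank ℝ E < finrank ℝ W + finrank ℝ T) :
    ∃ v : E, v ∈ W ⊓ T ∧ v ≠ 0 := by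
  have h1 := Submodule.finrank_sup_add_finrank_inf_eq W T
  have h2 : finrank ℝ ↥(W ⊔ T) ≤ finrank ℝ E := Submodule.finrank_le _
  have h3 : 0 < finrank ℝ ↥(W ⊓ T) := by omega
  rw [finrank_pos_iff] at h3
  obtain ⟨⟨v, hv⟩, hvne⟩ := exists_ne (0 : ↥(W ⊓ T))
  exact ⟨v, hv, fun h0 => hvne (Subtype.ext h0)⟩

/-- Courant–Fischer, lower-bound direction. -/
lemma cf_lower (A : Matrix (Fin m) (Fin n) ℝ) {k : ℕ} (hk : k < n) {t : ℝ} (ht : 0 ≤ t)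
    (W : Submodule ℝ (EuclideanSpace ℝ (Fin n))) (hdim : k + 1 ≤ finrank ℝ W)
    (hW : ∀ v : Fin n → ℝ, EN v ∈ W → t * ‖EN v‖ ≤ ‖EN (A *ᵥ v)‖) :
    t ≤ svals A ⟨k, hk⟩ := by
  classical
  set S : Finset (Fin n) := Finset.Ici (⟨k, hk⟩ : Fin n) with hS
  set T : Submodule ℝ (EuclideanSpace ℝ (Fin n)) :=
    Submodule.span ℝ (sBasis A '' (S : Set (Fin n))) with hT
  have hTrank : finrank ℝ T = n - k := by
    rw [hT, span_finrank (sBasis_orthonormal A)]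
    simp [hS, Fin.card_Ici]
  have hdimE : finrank ℝ (EuclideanSpace ℝ (Fin n)) = n := by
    simp [finrank_euclideanSpace]
  obtain ⟨v, hvmem, hvne⟩ := exists_ne_zero_mem_inf W T (by rw [hdimE, hTrank]; omega)
  obtain ⟨hvW, hvT⟩ := hvmem
  -- coefficients of v at positions < k vanish
  have hcoef : ∀ i : Fin n, i.val < k → sCoef A (v : Fin n → ℝ) i = 0 := by
    intro i hi
    have hiS : i ∉ (S : Set (Fin n)) := by
      simp only [hS, Finset.coe_Ici, Set.mem_Ici]
      intro hle
      have h1 := Fin.le_def.1 hle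
      have h2 : (⟨k, hk⟩ : Fin n).val = k := rfl
      omega
    have : EN (v : Fin n → ℝ) = v := rfl
    exact orth_span (sBasis_orthonormal A) hiS (by rw [this]; exact hvT)
  -- quadratic bound
  have hquad : ∑ j, ((A *ᵥ (v : Fin n → ℝ)) j) ^ 2
      ≤ sEig A ⟨k, hk⟩ * ∑ i, ((v : Fin n → ℝ) i) ^ 2 := by
    rw [quad_eq_sum_sCoef, normsq_eq_sum_sCoef A, Finset.mul_sum]
    refine Finset.sum_le_sum fun i _ => ?_
    rcases lt_or_ge i.val k with hi | hi
    · rw [hcoef i hi]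
      simp
    · have : sEig A i ≤ sEig A ⟨k, hk⟩ := sEig_antitone A (by
        rw [Fin.le_def]; exact hi)
      exact mul_le_mul_of_nonneg_right this (sq_nonneg _)
  have hvnorm : (0:ℝ) < ‖EN (v : Fin n → ℝ)‖ := by
    have : EN (v : Fin n → ℝ) = v := rfl
    rw [this]
    exact norm_pos_iff.2 hvne
  have ht2 := hW (v : Fin n → ℝ) (by
    have : EN (v : Fin n → ℝ) = v := rfl
    rw [this]; exact hvW)
  -- squares
  have hsq : t^2 * ‖EN (v : Fin n → ℝ)‖^2 ≤ sEig A ⟨k, hk⟩ * ‖EN (v : Fin n → ℝ)‖^2 := by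
    have h1 : (t * ‖EN (v : Fin n → ℝ)‖)^2 ≤ ‖EN (A *ᵥ (v : Fin n → ℝ))‖^2 :=
      pow_le_pow_left₀ (mul_nonneg ht hvnorm.le) ht2 2
    rw [normsq_EN] at h1
    calc t^2 * ‖EN (v : Fin n → ℝ)‖^2 = (t * ‖EN (v : Fin n → ℝ)‖)^2 := by ring
      _ ≤ ∑ j, ((A *ᵥ (v : Fin n → ℝ)) j) ^ 2 := h1
      _ ≤ sEig A ⟨k, hk⟩ * ∑ i, ((v : Fin n → ℝ) i) ^ 2 := hquad
      _ = sEig A ⟨k, hk⟩ * ‖EN (v : Fin n → ℝ)‖^2 := by rw [normsq_EN]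
  have hfin : t^2 ≤ sEig A ⟨k, hk⟩ := by
    have hN : (0:ℝ) < ‖EN (v : Fin n → ℝ)‖^2 := pow_pos hvnorm 2
    nlinarith [hsq]
  rw [svals_eq_sqrt_sEig]
  calc t = Real.sqrt (t^2) := (Real.sqrt_sq ht).symm
    _ ≤ Real.sqrt (sEig A ⟨k, hk⟩) := Real.sqrt_le_sqrt hfin

/-- Courant–Fischer, upper-bound (witness) direction. -/
lemma cf_upper (A : Matrix (Fin m) (Fin n) ℝ) {k : ℕ} (hk : k < n) :
    ∃ W : Submodule ℝ (EuclideanSpace ℝ (Fin n)), finrank ℝ W = k + 1 ∧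
      ∀ v : Fin n → ℝ, EN v ∈ W → svals A ⟨k, hk⟩ * ‖EN v‖ ≤ ‖EN (A *ᵥ v)‖ := by
  classical
  set S : Finset (Fin n) := Finset.Iic (⟨k, hk⟩ : Fin n) with hS
  refine ⟨Submodule.span ℝ (sBasis A '' (S : Set (Fin n))), ?_, ?_⟩
  · rw [span_finrank (sBasis_orthonormal A)]
    simp [hS, Fin.card_Iic]
  · intro v hv
    have hcoef : ∀ i : Fin n, k < i.val → sCoef A v i = 0 := by
      intro i hi
      have hiS : i ∉ (S : Set (Fin n)) := by
        simp only [hS, Finset.coe_Iic, Set.mem_Iic]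
        intro hle
        have h1 := Fin.le_def.1 hle
        have h2 : (⟨k, hk⟩ : Fin n).val = k := rfl
        omega
      exact orth_span (sBasis_orthonormal A) hiS hv
    have hquad : sEig A ⟨k, hk⟩ * ∑ i, (v i)^2 ≤ ∑ j, ((A *ᵥ v) j) ^ 2 := by
      rw [quad_eq_sum_sCoef, normsq_eq_sum_sCoef A, Finset.mul_sum]
      refine Finset.sum_le_sum fun i _ => ?_
      rcases le_or_gt i.val k with hi | hi
      · have : sEig A ⟨k, hk⟩ ≤ sEig A i := sEig_antitone A (by
          rw [Fin.le_def]; exact hi)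
        exact mul_le_mul_of_nonneg_right this (sq_nonneg _)
      · rw [hcoef i hi]
        simp
    have h1 : (svals A ⟨k, hk⟩ * ‖EN v‖)^2 ≤ ‖EN (A *ᵥ v)‖^2 := by
      rw [mul_pow, normsq_EN, normsq_EN, sq_svals]
      exact hquad
    have h2 : 0 ≤ svals A ⟨k, hk⟩ * ‖EN v‖ :=
      mul_nonneg (svals_nonneg A _) (norm_nonneg _)
    nlinarith [norm_nonneg (EN (A *ᵥ v))]

end SP
end PartD
section PartE
namespace SP
open scoped RealInnerProductSpace
open Module

variable {m n p q : ℕ}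

/-- Weyl-type perturbation bound for singular values. -/
lemma weyl_svals (A B : Matrix (Fin m) (Fin n) ℝ) {k : ℕ} (hk : k < n) :
    svals B ⟨k, hk⟩ - frobNorm (A - B) ≤ svals A ⟨k, hk⟩ := by
  set t := svals B ⟨k, hk⟩ - frobNorm (A - B) with htdef
  rcases le_or_gt t 0 with ht | ht
  · exact le_trans ht (svals_nonneg A _)
  · obtain ⟨W, hWrank, hW⟩ := cf_upper B hk
    refine cf_lower A hk ht.le W (le_of_eq hWrank.symm) fun v hv => ?_
    have h1 := hW v hv
    have h2 : ‖EN ((A - B) *ᵥ v)‖ ≤ frobNorm (A - B) * ‖EN v‖ := norm_mulVec_le_frob _ v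
    have h3 : EN (B *ᵥ v) = EN (A *ᵥ v) - EN ((A - B) *ᵥ v) := by
      show EN (B *ᵥ v) = EN (A *ᵥ v - (A - B) *ᵥ v)
      rw [← Matrix.sub_mulVec]
      norm_num
    have h4 : ‖EN (B *ᵥ v)‖ ≤ ‖EN (A *ᵥ v)‖ + ‖EN ((A - B) *ᵥ v)‖ := by
      rw [h3]; exact norm_sub_le _ _
    calc t * ‖EN v‖ = svals B ⟨k, hk⟩ * ‖EN v‖ - frobNorm (A - B) * ‖EN v‖ := by
          rw [htdef]; ring
      _ ≤ ‖EN (B *ᵥ v)‖ - ‖EN ((A - B) *ᵥ v)‖ := by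
          have := sub_le_sub h1 h2
          linarith [sub_le_sub h1 h2]
      _ ≤ ‖EN (A *ᵥ v)‖ := by linarith [h4]

/-- Singular value of a product: lower bound transfer to the left factor. -/
lemma svals_factor (A : Matrix (Fin m) (Fin p) ℝ) (B : Matrix (Fin p) (Fin n) ℝ)
    {k : ℕ} (hk : k < n) {t c : ℝ} (ht : 0 < t) (hc : 0 < c)
    (hB : ∀ v : Fin n → ℝ, ‖EN (B *ᵥ v)‖ ≤ c * ‖EN v‖)
    (hlow : t ≤ svals (A * B) ⟨k, hk⟩) :
    ∃ hkp : k < p, t / c ≤ svals A ⟨k, hkp⟩ := by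
  obtain ⟨W, hWrank, hW⟩ := cf_upper (A * B) hk
  have hWbound : ∀ v : Fin n → ℝ, EN v ∈ W → t * ‖EN v‖ ≤ ‖EN (A *ᵥ (B *ᵥ v))‖ := by
    intro v hv
    have := hW v hv
    have h2 : EN (A *ᵥ (B *ᵥ v)) = EN ((A * B) *ᵥ v) := by rw [Matrix.mulVec_mulVec]
    rw [h2]
    calc t * ‖EN v‖ ≤ svals (A * B) ⟨k, hk⟩ * ‖EN v‖ :=
          mul_le_mul_of_nonneg_right hlow (norm_nonneg _)
      _ ≤ ‖EN ((A * B) *ᵥ v)‖ := this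
  -- push W through B
  set f : EuclideanSpace ℝ (Fin n) →ₗ[ℝ] EuclideanSpace ℝ (Fin p) := Matrix.toEuclideanLin B with hf
  have hfapply : ∀ v : Fin n → ℝ, f (EN v) = EN (B *ᵥ v) := fun v => rfl
  set W' : Submodule ℝ (EuclideanSpace ℝ (Fin p)) := W.map f with hW'
  have hker : LinearMap.ker (f.domRestrict W) = ⊥ := by
    rw [LinearMap.ker_eq_bot']
    rintro ⟨v, hv⟩ hfv
    have hv0 : f v = 0 := hfv
    have hB0 : (B *ᵥ (v : Fin n → ℝ)) = 0 := congrArg WithLp.ofLp hv0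
    have := hWbound (v : Fin n → ℝ) (by exact hv)
    rw [hB0, Matrix.mulVec_zero] at this
    have hz : EN (0 : Fin m → ℝ) = 0 := rfl
    rw [hz] at this
    simp only [norm_zero] at this
    have : ‖EN (v : Fin n → ℝ)‖ ≤ 0 := by nlinarith
    have hvz : EN (v : Fin n → ℝ) = 0 := by
      have := le_antisymm this (norm_nonneg _)
      exact norm_eq_zero.1 this
    exact Subtype.ext hvz
  have hrange : LinearMap.range (f.domRestrict W) = W' := by
    rw [hW']; exact LinearMap.range_domRestrict _ _
  have hW'rank : finrank ℝ W' = k + 1 := by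
    have := LinearMap.finrank_range_add_finrank_ker (f.domRestrict W)
    rw [hker, hrange, finrank_bot, add_zero, hWrank] at this
    exact this
  have hkp : k < p := by
    have h1 : finrank ℝ W' ≤ finrank ℝ (EuclideanSpace ℝ (Fin p)) := Submodule.finrank_le _
    have h2 : finrank ℝ (EuclideanSpace ℝ (Fin p)) = p := by simp [finrank_euclideanSpace]
    omega
  refine ⟨hkp, ?_⟩
  refine cf_lower A hkp (by positivity) W' (le_of_eq hW'rank.symm) fun w hw => ?_
  obtain ⟨v, hvW, hfv⟩ := hw
  have hveq : EN (B *ᵥ (v : Fin n → ℝ)) = EN w := by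
    rw [← hfapply]
    exact hfv
  have hnormw : ‖EN w‖ ≤ c * ‖EN (v : Fin n → ℝ)‖ := by
    rw [← hveq]
    exact hB _
  have hAval : t * ‖EN (v : Fin n → ℝ)‖ ≤ ‖EN (A *ᵥ w)‖ := by
    have := hWbound (v : Fin n → ℝ) hvW
    have heq : A *ᵥ (B *ᵥ (v : Fin n → ℝ)) = A *ᵥ w := by
      have : (B *ᵥ (v : Fin n → ℝ)) = w := congrArg WithLp.ofLp hveq
      rw [this]
    rw [heq] at this
    exact this
  calc t / c * ‖EN w‖ ≤ t / c * (c * ‖EN (v : Fin n → ℝ)‖) :=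
        mul_le_mul_of_nonneg_left hnormw (by positivity)
    _ = t * ‖EN (v : Fin n → ℝ)‖ := by field_simp
    _ ≤ ‖EN (A *ᵥ w)‖ := hAval

/-- inner products of images of sorted eigenvectors -/
lemma dot_image (A : Matrix (Fin m) (Fin n) ℝ) (i j : Fin n) :
    (A *ᵥ (sBasis A i : Fin n → ℝ)) ⬝ᵥ (A *ᵥ (sBasis A j : Fin n → ℝ))
      = if i = j then sEig A i else 0 := by
  have h1 : (A *ᵥ (sBasis A i : Fin n → ℝ)) ⬝ᵥ (A *ᵥ (sBasis A j : Fin n → ℝ))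
      = (sBasis A i : Fin n → ℝ) ⬝ᵥ ((Aᴴ * A) *ᵥ (sBasis A j : Fin n → ℝ)) := by
    rw [← Matrix.mulVec_mulVec, Matrix.dotProduct_mulVec _ Aᴴ _]
    have hAv : (sBasis A i : Fin n → ℝ) ᵥ* Aᴴ = A *ᵥ (sBasis A i : Fin n → ℝ) := by
      rw [conjTranspose_eq_transpose_real, ← Matrix.vecMul_transpose]
    rw [hAv]
  rw [h1, mulVec_sBasis, dotProduct_smul]
  have h2 : (sBasis A i : Fin n → ℝ) ⬝ᵥ (sBasis A j : Fin n → ℝ)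
      = ⟪sBasis A i, sBasis A j⟫ := by
    rw [PiLp.inner_apply]; simp [dotProduct, mul_comm]
  have h3 := orthonormal_iff_ite.1 (sBasis_orthonormal A) i j
  rw [smul_eq_mul, h2, h3]
  by_cases hij : i = j
  · subst hij; simp
  · simp [hij]

/-- tail singular values of a short-fat product vanish: at most `m` nonzero ones. -/
lemma svals_tail_zero (A : Matrix (Fin m) (Fin n) ℝ) (j : Fin n) (hj : m ≤ j.val) :
    svals A j = 0 := by
  by_contra hne
  have hpos : 0 < sEig A j := sEig_pos_of_svals_ne_zero hne
  have hposall : ∀ i : Fin n, i.val ≤ j.val → 0 < sEig A i := fun i hi =>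
    lt_of_lt_of_le hpos (sEig_antitone A (Fin.le_def.2 hi))
  -- build an orthonormal family of size j.val + 1 in ℝ^m
  set emb : Fin (j.val + 1) → Fin n := fun s => ⟨s.val, lt_of_le_of_lt (Nat.lt_succ_iff.1 s.isLt) j.isLt⟩ with hemb
  have hembval : ∀ s, (emb s).val = s.val := fun s => rfl
  set g : Fin (j.val + 1) → EuclideanSpace ℝ (Fin m) :=
    fun s => EN ((Real.sqrt (sEig A (emb s)))⁻¹ • (A *ᵥ (sBasis A (emb s) : Fin n → ℝ))) with hg
  have hgorth : Orthonormal ℝ g := by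
    rw [orthonormal_iff_ite]
    intro s t
    have hs : 0 < sEig A (emb s) := hposall _ (by rw [hembval]; exact Nat.lt_succ_iff.1 s.isLt)
    have htp : 0 < sEig A (emb t) := hposall _ (by rw [hembval]; exact Nat.lt_succ_iff.1 t.isLt)
    have hinner : ⟪g s, g t⟫
        = (Real.sqrt (sEig A (emb s)))⁻¹ * ((Real.sqrt (sEig A (emb t)))⁻¹ *
          ((A *ᵥ (sBasis A (emb s) : Fin n → ℝ)) ⬝ᵥ (A *ᵥ (sBasis A (emb t) : Fin n → ℝ)))) := by
      rw [hg]
      simp only [EN_smul]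
      rw [real_inner_smul_left, real_inner_smul_right, inner_EN, dotProduct_eq_sum]
    rw [hinner, dot_image]
    by_cases hst : s = t
    · subst hst
      simp only [if_pos rfl, ↓reduceIte]
      rw [← mul_assoc, ← mul_inv, Real.mul_self_sqrt hs.le, inv_mul_cancel₀ hs.ne']
    · have : emb s ≠ emb t := fun h => hst (by
        apply Fin.ext
        have := congrArg Fin.val h
        simpa [hembval] using this)
      rw [if_neg this, if_neg hst]
      ring
  have hcard := hgorth.linearIndependent.fintype_card_le_finrank
  rw [Fintype.card_fin] at hcard
  have : finrank ℝ (EuclideanSpace ℝ (Fin m)) = m := by simp [finrank_euclideanSpace]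
  omega

/-- determinant identity: product of the top `m` sorted eigenvalues of `AᴴA`
equals `det (A * Aᴴ)`, provided they are all positive. -/
lemma det_eq_prod_sEig (A : Matrix (Fin m) (Fin n) ℝ) (hmn : m ≤ n)
    (hpos : ∀ s : Fin m, 0 < sEig A ⟨s.val, lt_of_lt_of_le s.isLt hmn⟩) :
    Matrix.det (A * Aᴴ) = ∏ s : Fin m, sEig A ⟨s.val, lt_of_lt_of_le s.isLt hmn⟩ := by
  classical
  set emb : Fin m → Fin n := fun s => ⟨s.val, lt_of_lt_of_le s.isLt hmn⟩ with hembdef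
  set B : Matrix (Fin m) (Fin m) ℝ := Matrix.of fun r s =>
    (Real.sqrt (sEig A (emb s)))⁻¹ * (A *ᵥ (sBasis A (emb s) : Fin n → ℝ)) r with hB
  have hBcol : ∀ s, (fun r => B r s) = (Real.sqrt (sEig A (emb s)))⁻¹ • (A *ᵥ (sBasis A (emb s) : Fin n → ℝ)) := by
    intro s; funext r; rfl
  have hBtB : Bᵀ * B = 1 := by
    ext s t
    rw [Matrix.mul_apply]
    have : ∑ r, Bᵀ s r * B r t
        = (Real.sqrt (sEig A (emb s)))⁻¹ * ((Real.sqrt (sEig A (emb t)))⁻¹ *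
          ((A *ᵥ (sBasis A (emb s) : Fin n → ℝ)) ⬝ᵥ (A *ᵥ (sBasis A (emb t) : Fin n → ℝ)))) := by
      rw [dotProduct, Finset.mul_sum, Finset.mul_sum]
      refine Finset.sum_congr rfl fun r _ => ?_
      rw [Matrix.transpose_apply]
      show B r s * B r t = _
      rw [hB]
      simp only [Matrix.of_apply]
      ring
    rw [show ∑ r, Bᵀ s r * B r t = ∑ r, Bᵀ s r * B r t from rfl, this, dot_image]
    by_cases hst : s = t
    · subst hst
      have hs := hpos s
      rw [if_pos rfl, Matrix.one_apply_eq]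
      rw [← mul_assoc, ← mul_inv, Real.mul_self_sqrt (x := sEig A (emb s)) hs.le,
        inv_mul_cancel₀ (hs.ne' : sEig A (emb s) ≠ 0)]
    · have hne : emb s ≠ emb t := by
        intro h
        have hvv : ((emb s : Fin n) : ℕ) = ((emb t : Fin n) : ℕ) := congrArg Fin.val h
        exact hst (Fin.ext hvv)
      rw [if_neg hne, Matrix.one_apply_ne hst]
      ring
  -- A Aᴴ acts on columns of B as multiplication by eigenvalues
  have hAAB : (A * Aᴴ) * B = B * Matrix.diagonal (fun s => sEig A (emb s)) := by
    ext r t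
    have hcol : ∀ x, B x t = ((Real.sqrt (sEig A (emb t)))⁻¹ • (A *ᵥ (sBasis A (emb t) : Fin n → ℝ))) x := by
      intro x; rfl
    have hlhs : ((A * Aᴴ) * B) r t = ((A * Aᴴ) *ᵥ (fun x => B x t)) r := by
      rw [Matrix.mul_apply]; rfl
    have hmv : (A * Aᴴ) *ᵥ (fun x => B x t)
        = sEig A (emb t) • (fun x => B x t) := by
      have h1 : (fun x => B x t) = (Real.sqrt (sEig A (emb t)))⁻¹ • (A *ᵥ (sBasis A (emb t) : Fin n → ℝ)) := by
        funext x; exact hcol x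
      rw [h1, Matrix.mulVec_smul]
      have h2 : (A * Aᴴ) *ᵥ (A *ᵥ (sBasis A (emb t) : Fin n → ℝ))
          = A *ᵥ ((Aᴴ * A) *ᵥ (sBasis A (emb t) : Fin n → ℝ)) := by
        rw [Matrix.mulVec_mulVec, Matrix.mulVec_mulVec, Matrix.mul_assoc]
      rw [h2, mulVec_sBasis, Matrix.mulVec_smul, smul_comm]
    rw [hlhs, hmv]
    rw [Matrix.mul_apply]
    simp [Matrix.diagonal, mul_comm]
  -- take determinants
  have hdetB : Matrix.det Bᵀ * Matrix.det B = 1 := by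
    rw [← Matrix.det_mul, hBtB, Matrix.det_one]
  calc Matrix.det (A * Aᴴ)
      = Matrix.det Bᵀ * Matrix.det B * Matrix.det (A * Aᴴ) := by rw [hdetB]; ring
    _ = Matrix.det Bᵀ * (Matrix.det (A * Aᴴ) * Matrix.det B) := by ring
    _ = Matrix.det Bᵀ * Matrix.det ((A * Aᴴ) * B) := by rw [Matrix.det_mul]
    _ = Matrix.det Bᵀ * Matrix.det (B * Matrix.diagonal (fun s => sEig A (emb s))) := by rw [hAAB]
    _ = Matrix.det Bᵀ * (Matrix.det B * Matrix.det (Matrix.diagonal (fun s => sEig A (emb s)))) := by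
        rw [Matrix.det_mul]
    _ = (Matrix.det Bᵀ * Matrix.det B) * Matrix.det (Matrix.diagonal (fun s => sEig A (emb s))) := by ring
    _ = Matrix.det (Matrix.diagonal (fun s => sEig A (emb s))) := by rw [hdetB]; ring
    _ = ∏ s : Fin m, sEig A (emb s) := Matrix.det_diagonal

/-- singular values of the zero matrix vanish -/
lemma svals_zero_matrix (i : Fin n) : svals (0 : Matrix (Fin m) (Fin n) ℝ) i = 0 := by
  have h := mulVec_sBasis (0 : Matrix (Fin m) (Fin n) ℝ) i
  have h0 : (0 : Matrix (Fin m) (Fin n) ℝ)ᴴ * (0 : Matrix (Fin m) (Fin n) ℝ) = (0 : Matrix (Fin n) (Fin n) ℝ) := by simp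
  rw [h0, Matrix.zero_mulVec] at h
  have hb : (sBasis (0 : Matrix (Fin m) (Fin n) ℝ) i : Fin n → ℝ) ≠ 0 := by
    intro hc
    have h1 := (sBasis_orthonormal (0 : Matrix (Fin m) (Fin n) ℝ)).1 i
    have h2 : sBasis (0 : Matrix (Fin m) (Fin n) ℝ) i = 0 := by
      apply (norm_eq_zero).1
      have : sBasis (0 : Matrix (Fin m) (Fin n) ℝ) i = EN (0 : Fin n → ℝ) := by
        show _ = EN (0 : Fin n → ℝ)
        exact congrArg EN hc
      rw [this]
      simp [EN_zero]
    rw [h2] at h1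
    simp at h1
  have : sEig (0 : Matrix (Fin m) (Fin n) ℝ) i = 0 := by
    rcases smul_eq_zero.1 h.symm with h1 | h1
    · exact h1
    · exact absurd h1 hb
  rw [svals_eq_sqrt_sEig, this, Real.sqrt_zero]

end SP
end PartE
section PartF
namespace SP
open Matrix

variable {m n p q K : ℕ}

lemma trace_eq_sum_eigenvalues {K : ℕ} (A : Matrix (Fin K) (Fin K) ℝ) (hA : A.IsHermitian) :
    Matrix.trace A = ∑ i, hA.eigenvalues i := by
  rw [hA.trace_eq_sum_eigenvalues]
  norm_num

lemma det_eq_prod_eigenvalues_real {K : ℕ} (A : Matrix (Fin K) (Fin K) ℝ) (hA : A.IsHermitian) :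
    Matrix.det A = ∏ i, hA.eigenvalues i := by
  rw [hA.det_eq_prod_eigenvalues]; norm_num

lemma psd_det_nonneg {K : ℕ} {A : Matrix (Fin K) (Fin K) ℝ} (hA : A.PosSemidef) :
    0 ≤ Matrix.det A := by
  rw [det_eq_prod_eigenvalues_real A hA.1]
  exact Finset.prod_nonneg fun i _ => hA.eigenvalues_nonneg i

/-- AM–GM: determinant of a PSD matrix is at most `(trace/K)^K`. -/
lemma det_le_trace_div_pow {K : ℕ} (hK : 0 < K) {A : Matrix (Fin K) (Fin K) ℝ}
    (hA : A.PosSemidef) : Matrix.det A ≤ (Matrix.trace A / K) ^ K := by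
  rw [det_eq_prod_eigenvalues_real A hA.1, trace_eq_sum_eigenvalues A hA.1]
  set lam := hA.1.eigenvalues with hlam
  have hnn : ∀ i ∈ (Finset.univ : Finset (Fin K)), (0:ℝ) ≤ lam i := fun i _ => hA.eigenvalues_nonneg i
  have hw : ∀ i ∈ (Finset.univ : Finset (Fin K)), (0:ℝ) ≤ (K:ℝ)⁻¹ := fun _ _ => by positivity
  have hw1 : ∑ _i : Fin K, (K:ℝ)⁻¹ = 1 := by
    rw [Finset.sum_const, Finset.card_univ, Fintype.card_fin, nsmul_eq_mul]
    field_simp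
  have h := Real.geom_mean_le_arith_mean_weighted Finset.univ (fun _ => (K:ℝ)⁻¹) lam hw hw1 hnn
  -- h : ∏ i, lam i ^ (K⁻¹:ℝ) ≤ ∑ i, K⁻¹ * lam i
  have hprod : ∏ i, lam i ^ ((K:ℝ)⁻¹) = (∏ i, lam i) ^ ((K:ℝ)⁻¹) := by
    rw [← Real.finset_prod_rpow Finset.univ lam hnn]
  have hsum : ∑ i, (K:ℝ)⁻¹ * lam i = (∑ i, lam i) / K := by
    rw [← Finset.mul_sum]; ring
  rw [hprod, hsum] at h
  have hPnn : (0:ℝ) ≤ ∏ i, lam i := Finset.prod_nonneg hnn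
  have hMnn : (0:ℝ) ≤ (∑ i, lam i) / K := le_trans (Real.rpow_nonneg hPnn _) h
  have hfin : ((∏ i, lam i) ^ ((K:ℝ)⁻¹)) ^ K ≤ ((∑ i, lam i) / K) ^ K :=
    pow_le_pow_left₀ (Real.rpow_nonneg hPnn _) h K
  rwa [← Real.rpow_natCast ((∏ i, lam i) ^ ((K:ℝ)⁻¹)) K, ← Real.rpow_mul hPnn,
    inv_mul_cancel₀ (by exact_mod_cast hK.ne'), Real.rpow_one] at hfin

lemma dot_mulVec_self {a b : ℕ} (M : Matrix (Fin a) (Fin b) ℝ) (v : Fin b → ℝ) :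
    (M *ᵥ v) ⬝ᵥ (M *ᵥ v) = v ⬝ᵥ ((Mᵀ * M) *ᵥ v) := by
  rw [← Matrix.mulVec_mulVec, Matrix.dotProduct_mulVec v Mᵀ, Matrix.vecMul_transpose]

/-- a coisometry contracts Euclidean norms -/
lemma coisometry_normsq {a b : ℕ} {Q : Matrix (Fin a) (Fin b) ℝ} (hQ : Q * Qᵀ = 1)
    (v : Fin b → ℝ) : ∑ j, ((Q *ᵥ v) j) ^ 2 ≤ ∑ i, v i ^ 2 := by
  set P : Matrix (Fin b) (Fin b) ℝ := Qᵀ * Q with hP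
  have hidem : P * P = P := by
    rw [hP, Matrix.mul_assoc, ← Matrix.mul_assoc Q Qᵀ Q, hQ, Matrix.one_mul]
  have hsym : Pᵀ = P := by
    rw [hP, Matrix.transpose_mul, Matrix.transpose_transpose]
  have ha : ∑ j, ((Q *ᵥ v) j) ^ 2 = v ⬝ᵥ (P *ᵥ v) := by
    rw [← dotProduct_self_eq_sum_sq, dot_mulVec_self]
  have hrem : ∑ i, v i ^ 2 - v ⬝ᵥ (P *ᵥ v) = ((1 - P) *ᵥ v) ⬝ᵥ ((1 - P) *ᵥ v) := by
    rw [dot_mulVec_self]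
    have h1 : (1 - P)ᵀ * (1 - P) = 1 - P := by
      rw [Matrix.transpose_sub, Matrix.transpose_one, hsym, Matrix.mul_sub, Matrix.sub_mul,
        Matrix.sub_mul, Matrix.one_mul, Matrix.mul_one, Matrix.one_mul, hidem]
      abel
    rw [h1, Matrix.sub_mulVec, Matrix.one_mulVec, dotProduct_sub, ← dotProduct_self_eq_sum_sq]
  have hnn : 0 ≤ ((1 - P) *ᵥ v) ⬝ᵥ ((1 - P) *ᵥ v) := by
    rw [dotProduct_self_eq_sum_sq]
    exact Finset.sum_nonneg fun i _ => sq_nonneg _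
  rw [ha]
  linarith [hrem, hnn]

lemma frobNorm_coisometry_mul {a b c : ℕ} {Q : Matrix (Fin a) (Fin b) ℝ} (hQ : Q * Qᵀ = 1)
    (W : Matrix (Fin b) (Fin c) ℝ) : frobNorm (Q * W) ^ 2 ≤ frobNorm W ^ 2 := by
  have lhs_eq : ∑ i, ∑ j, ((Q * W) i j)^2 = ∑ j, ∑ i, ((Q * W) i j)^2 := by
    rw [Finset.sum_comm]
  have rhs_eq : ∑ x, ∑ j, (W x j)^2 = ∑ j, ∑ x, (W x j)^2 := by
    rw [Finset.sum_comm]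
  rw [frobNorm_sq, frobNorm_sq, lhs_eq, rhs_eq]
  refine Finset.sum_le_sum fun j _ => ?_
  have hcol : ∀ i, (Q * W) i j = (Q *ᵥ (fun x => W x j)) i := by
    intro i; rw [Matrix.mul_apply]; rfl
  calc ∑ i, ((Q * W) i j) ^ 2 = ∑ i, ((Q *ᵥ (fun x => W x j)) i) ^ 2 := by
        refine Finset.sum_congr rfl fun i _ => by rw [hcol i]
    _ ≤ ∑ x, (W x j) ^ 2 := coisometry_normsq hQ _

/-- Key per-layer determinant contraction inequality. -/
lemma det_contraction {K p q : ℕ} (hK : 0 < K) (C : Matrix (Fin K) (Fin p) ℝ)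
    (W : Matrix (Fin p) (Fin q) ℝ) :
    Matrix.det ((C * W) * (C * W)ᵀ) ≤ Matrix.det (C * Cᵀ) * (frobNorm W ^ 2 / K) ^ K := by
  classical
  have hpsdCW : ((C * W) * (C * W)ᵀ).PosSemidef := by
    have := Matrix.posSemidef_self_mul_conjTranspose (C * W)
    rwa [conjTranspose_eq_transpose_real] at this
  have hpsdC : (C * Cᵀ).PosSemidef := by
    have := Matrix.posSemidef_self_mul_conjTranspose C
    rwa [conjTranspose_eq_transpose_real] at this
  rcases eq_or_ne (Matrix.det (C * Cᵀ)) 0 with hdet | hdet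
  · -- degenerate case : the left side is also zero
    obtain ⟨x, hx0, hx⟩ := Matrix.exists_mulVec_eq_zero_iff.2 hdet
    have hCx : Cᵀ *ᵥ x = 0 := by
      have h1 : x ⬝ᵥ ((C * Cᵀ) *ᵥ x) = 0 := by rw [hx, dotProduct_zero]
      have h2 : (Cᵀ *ᵥ x) ⬝ᵥ (Cᵀ *ᵥ x) = 0 := by
        rw [dot_mulVec_self, Matrix.transpose_transpose]
        exact h1
      rw [dotProduct_self_eq_sum_sq] at h2
      funext j
      have := (Finset.sum_eq_zero_iff_of_nonneg (fun i _ => sq_nonneg ((Cᵀ *ᵥ x) i))).1 h2 j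
        (Finset.mem_univ j)
      simpa using pow_eq_zero_iff (n := 2) (by norm_num) |>.1 this
    have hzero : ((C * W) * (C * W)ᵀ) *ᵥ x = 0 := by
      have h1 : (C * W) * (C * W)ᵀ = ((C * W) * Wᵀ) * Cᵀ := by
        rw [Matrix.transpose_mul]
        simp only [Matrix.mul_assoc]
      rw [h1, ← Matrix.mulVec_mulVec, hCx, Matrix.mulVec_zero]
    have hdet0 : Matrix.det ((C * W) * (C * W)ᵀ) = 0 :=
      Matrix.exists_mulVec_eq_zero_iff.1 ⟨x, hx0, hzero⟩
    rw [hdet0, hdet, zero_mul]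
  · -- invertible case
    set P : Matrix (Fin K) (Fin K) ℝ := C * Cᵀ with hPdef
    obtain ⟨R, hRR, hRsym⟩ : ∃ R : Matrix (Fin K) (Fin K) ℝ, R * R = P ∧ Rᵀ = R := by
      open scoped MatrixOrder in
      refine ⟨CFC.sqrt P, CFC.sqrt_mul_sqrt_self P (Matrix.nonneg_iff_posSemidef.2 hpsdC), ?_⟩
      open scoped MatrixOrder in
      have h1 : (CFC.sqrt P)ᴴ = CFC.sqrt P :=
        (Matrix.nonneg_iff_posSemidef.1 (CFC.sqrt_nonneg P)).1
      rwa [conjTranspose_eq_transpose_real] at h1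
    have hdetR : Matrix.det R * Matrix.det R = Matrix.det P := by
      rw [← Matrix.det_mul, hRR]
    have hdetRne : Matrix.det R ≠ 0 := fun h => hdet (by rw [← hdetR, h, mul_zero])
    have hRunit : IsUnit R.det := isUnit_iff_ne_zero.2 hdetRne
    set Q : Matrix (Fin K) (Fin p) ℝ := R⁻¹ * C with hQdef
    have hRQ : R * Q = C := by
      rw [hQdef, ← Matrix.mul_assoc, Matrix.mul_nonsing_inv R hRunit, Matrix.one_mul]
    have hQt : Qᵀ = Cᵀ * R⁻¹ := by
      rw [hQdef, Matrix.transpose_mul, Matrix.transpose_nonsing_inv, hRsym]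
    have hkey : R⁻¹ * ((C * Cᵀ) * R⁻¹) = 1 := by
      rw [← hPdef, ← hRR]
      have h2 : R⁻¹ * ((R * R) * R⁻¹) = (R⁻¹ * R) * (R * R⁻¹) := by
        simp only [Matrix.mul_assoc]
      rw [h2, Matrix.nonsing_inv_mul R hRunit, Matrix.mul_nonsing_inv R hRunit, Matrix.one_mul]
    have hQQ : Q * Qᵀ = 1 := by
      rw [hQdef, hQt]
      have h3 : R⁻¹ * C * (Cᵀ * R⁻¹) = R⁻¹ * ((C * Cᵀ) * R⁻¹) := by
        simp only [Matrix.mul_assoc]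
      rw [h3, hkey]
    -- decompose the LHS
    have hdecomp : (C * W) * (C * W)ᵀ = R * ((Q * W) * (Q * W)ᵀ) * Rᵀ := by
      rw [← hRQ]
      simp only [Matrix.transpose_mul, Matrix.mul_assoc, hRsym]
    have hpsdQW : ((Q * W) * (Q * W)ᵀ).PosSemidef := by
      have := Matrix.posSemidef_self_mul_conjTranspose (Q * W)
      rwa [conjTranspose_eq_transpose_real] at this
    have htr : Matrix.trace ((Q * W) * (Q * W)ᵀ) ≤ frobNorm W ^ 2 := by
      have h1 : Matrix.trace ((Q * W) * (Q * W)ᵀ) = frobNorm (Q * W) ^ 2 := by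
        have := frobNorm_sq_eq_trace (Q * W)
        rwa [conjTranspose_eq_transpose_real] at this
      rw [h1]
      exact frobNorm_coisometry_mul hQQ W
    have hdetQW : Matrix.det ((Q * W) * (Q * W)ᵀ) ≤ (frobNorm W ^ 2 / K) ^ K := by
      calc Matrix.det ((Q * W) * (Q * W)ᵀ)
          ≤ (Matrix.trace ((Q * W) * (Q * W)ᵀ) / K) ^ K := det_le_trace_div_pow hK hpsdQW
        _ ≤ (frobNorm W ^ 2 / K) ^ K := by
            have h0 : (0:ℝ) ≤ Matrix.trace ((Q * W) * (Q * W)ᵀ) := by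
              have := frobNorm_sq_eq_trace (Q * W)
              rw [conjTranspose_eq_transpose_real] at this
              rw [this]
              positivity
            gcongr
    calc Matrix.det ((C * W) * (C * W)ᵀ)
        = Matrix.det R * Matrix.det ((Q * W) * (Q * W)ᵀ) * Matrix.det Rᵀ := by
          rw [hdecomp, Matrix.det_mul, Matrix.det_mul]
      _ = Matrix.det P * Matrix.det ((Q * W) * (Q * W)ᵀ) := by
          rw [Matrix.det_transpose, ← hdetR]; ring
      _ ≤ Matrix.det P * (frobNorm W ^ 2 / K) ^ K := by
          apply mul_le_mul_of_nonneg_left hdetQW (psd_det_nonneg hpsdC)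

end SP
end PartF
section PartG1
namespace SP
open Matrix

/-- Bound on the condition number via the determinant of `M * Mᵀ` and
a lower bound `s` on the smallest relevant singular value. -/
lemma kappa_bound {m n1 : ℕ} (M : Matrix (Fin m) (Fin n1) ℝ) (hm : 0 < m) (hm1 : m - 1 < n1)
    {s : ℝ} (hs : 0 < s) (hsK : s ≤ svals M ⟨m - 1, hm1⟩) :
    kappa M ≤ Real.sqrt (Matrix.det (M * Mᵀ)) / s ^ m := by
  classical
  have hpsd : (M * Mᵀ).PosSemidef := by
    have := Matrix.posSemidef_self_mul_conjTranspose M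
    rwa [conjTranspose_eq_transpose_real] at this
  have hdetnn : 0 ≤ Matrix.det (M * Mᵀ) := psd_det_nonneg hpsd
  have hσK : 0 < svals M ⟨m - 1, hm1⟩ := lt_of_lt_of_le hs hsK
  have hmn : m ≤ n1 := by omega
  -- top eigenvalues are positive
  have hposON : ∀ t : Fin m, 0 < sEig M ⟨t.val, lt_of_lt_of_le t.isLt hmn⟩ := by
    intro t
    have h1 : sEig M ⟨m - 1, hm1⟩ ≤ sEig M ⟨t.val, lt_of_lt_of_le t.isLt hmn⟩ := by
      apply sEig_antitone
      rw [Fin.le_def]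
      show t.val ≤ m - 1
      omega
    have h2 : 0 < sEig M ⟨m - 1, hm1⟩ := by
      have := sq_svals M ⟨m - 1, hm1⟩
      nlinarith [hσK]
    linarith
  -- determinant identity
  have hdet : Matrix.det (M * Mᵀ) = ∏ t : Fin m, sEig M ⟨t.val, lt_of_lt_of_le t.isLt hmn⟩ := by
    have := det_eq_prod_sEig M hmn hposON
    rwa [conjTranspose_eq_transpose_real] at this
  -- the product of the top m singular values
  set Pσ : ℝ := ∏ t : Fin m, svals M ⟨t.val, lt_of_lt_of_le t.isLt hmn⟩ with hPσ
  have hPσnn : 0 ≤ Pσ := Finset.prod_nonneg fun t _ => svals_nonneg M _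
  have hPσsq : Pσ ^ 2 = Matrix.det (M * Mᵀ) := by
    rw [hdet, hPσ, ← Finset.prod_pow]
    exact Finset.prod_congr rfl fun t _ => sq_svals M _
  have hPσ_eq : Pσ = Real.sqrt (Matrix.det (M * Mᵀ)) := by
    rw [← hPσsq, Real.sqrt_sq hPσnn]
  -- bound each ratio
  apply Real.sSup_le
  · rintro z ⟨i, j, hi, hj, rfl⟩
    -- j is in the top m
    have hjlt : j.val < m := by
      by_contra h
      exact hj (svals_tail_zero M j (by omega))
    have hjge : svals M ⟨m - 1, hm1⟩ ≤ svals M j := by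
      apply svals_antitone
      rw [Fin.le_def]
      show j.val ≤ m - 1
      omega
    have hjpos : 0 < svals M j := lt_of_lt_of_le hσK hjge
    have h0n1 : 0 < n1 := by omega
    have hi0 : svals M i ≤ svals M ⟨0, h0n1⟩ := by
      apply svals_antitone
      rw [Fin.le_def]
      exact Nat.zero_le _
    -- product lower bound : svals₀ * σK^(m-1) ≤ Pσ
    have hmem0 : (⟨0, hm⟩ : Fin m) ∈ Finset.univ := Finset.mem_univ _
    have hsplit := (Finset.mul_prod_erase Finset.univ
      (fun t : Fin m => svals M ⟨t.val, lt_of_lt_of_le t.isLt hmn⟩) hmem0).symm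
    have herase : svals M ⟨m - 1, hm1⟩ ^ (m - 1)
        ≤ ∏ t ∈ Finset.univ.erase (⟨0, hm⟩ : Fin m),
            svals M ⟨t.val, lt_of_lt_of_le t.isLt hmn⟩ := by
      have hcard : (Finset.univ.erase (⟨0, hm⟩ : Fin m)).card = m - 1 := by
        rw [Finset.card_erase_of_mem hmem0, Finset.card_univ, Fintype.card_fin]
      calc svals M ⟨m - 1, hm1⟩ ^ (m - 1)
          = ∏ _t ∈ Finset.univ.erase (⟨0, hm⟩ : Fin m), svals M ⟨m - 1, hm1⟩ := by
            rw [Finset.prod_const, hcard]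
        _ ≤ ∏ t ∈ Finset.univ.erase (⟨0, hm⟩ : Fin m),
              svals M ⟨t.val, lt_of_lt_of_le t.isLt hmn⟩ := by
            apply Finset.prod_le_prod
            · intro t _; exact le_of_lt hσK
            · intro t _
              apply svals_antitone
              rw [Fin.le_def]
              show (t : Fin m).val ≤ m - 1
              omega
    have hprod_lb : svals M ⟨0, h0n1⟩ * svals M ⟨m - 1, hm1⟩ ^ (m - 1) ≤ Pσ := by
      rw [hPσ, hsplit]
      apply mul_le_mul_of_nonneg_left herase (svals_nonneg M _)
    -- now the chain
    have hchain1 : svals M i / svals M j ≤ svals M ⟨0, h0n1⟩ / svals M ⟨m - 1, hm1⟩ := by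
      apply div_le_div₀ (svals_nonneg M _) hi0 hσK hjge
    have hchain2 : svals M ⟨0, h0n1⟩ / svals M ⟨m - 1, hm1⟩
        ≤ Pσ / svals M ⟨m - 1, hm1⟩ ^ m := by
      rw [div_le_div_iff₀ hσK (by positivity)]
      have hmm : svals M ⟨m - 1, hm1⟩ ^ m
          = svals M ⟨m - 1, hm1⟩ ^ (m - 1) * svals M ⟨m - 1, hm1⟩ := by
        rw [← pow_succ]
        congr 1
        omega
      calc svals M ⟨0, h0n1⟩ * svals M ⟨m - 1, hm1⟩ ^ m
          = (svals M ⟨0, h0n1⟩ * svals M ⟨m - 1, hm1⟩ ^ (m-1)) * svals M ⟨m - 1, hm1⟩ := by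
            rw [hmm]; ring
        _ ≤ Pσ * svals M ⟨m - 1, hm1⟩ := by
            apply mul_le_mul_of_nonneg_right hprod_lb (svals_nonneg M _)
    have hchain3 : Pσ / svals M ⟨m - 1, hm1⟩ ^ m ≤ Pσ / s ^ m := by
      apply div_le_div_of_nonneg_left hPσnn (by positivity)
      exact pow_le_pow_left₀ hs.le hsK m
    calc svals M i / svals M j
        ≤ svals M ⟨0, h0n1⟩ / svals M ⟨m - 1, hm1⟩ := hchain1
      _ ≤ Pσ / svals M ⟨m - 1, hm1⟩ ^ m := hchain2
      _ ≤ Pσ / s ^ m := hchain3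
      _ = Real.sqrt (Matrix.det (M * Mᵀ)) / s ^ m := by rw [hPσ_eq]
  · positivity

end SP
end PartG1
section PartG2
namespace SP
open Finset

lemma numeric_final {L1 L2 L K : ℕ} (hL1 : 1 ≤ L1) (hL2 : 1 ≤ L2) (hL : L = L1 + L2)
    (hK : 0 < K) (f : ℕ → ℝ) (hf : ∀ j, 0 ≤ f j) (c t0 x : ℝ) (ht0 : 0 < t0) (hx : 0 < x)
    (hsum : ∑ j ∈ Finset.Ioc 0 L, f j ^ 2 ≤ (L : ℝ) * K + c) :
    Real.sqrt (∏ j ∈ Finset.Ioc L1 L, (f j ^ 2 / K) ^ K)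
      * ((∏ j ∈ Finset.Ioc 0 L1, f j) * x / t0) ^ K
    ≤ Real.exp ((1 / 2) * (c + (L1 : ℝ) * K * Real.log K - 2 * K * Real.log (t0 / x))) := by
  have hKR : (0:ℝ) < (K:ℝ) := by exact_mod_cast hK
  have hLpos : 0 < L := by omega
  have hLR : (0:ℝ) < (L:ℝ) := by exact_mod_cast hLpos
  set A1 : ℝ := ∏ j ∈ Finset.Ioc 0 L1, f j ^ 2 with hA1
  set Ahi : ℝ := ∏ j ∈ Finset.Ioc L1 L, f j ^ 2 with hAhi
  set Pf : ℝ := ∏ j ∈ Finset.Ioc 0 L1, f j with hPf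
  have hA1nn : 0 ≤ A1 := Finset.prod_nonneg fun j _ => sq_nonneg _
  have hAhinn : 0 ≤ Ahi := Finset.prod_nonneg fun j _ => sq_nonneg _
  have hPfnn : 0 ≤ Pf := Finset.prod_nonneg fun j _ => hf j
  have hPfsq : Pf ^ 2 = A1 := by
    rw [hPf, hA1, ← Finset.prod_pow]
  have hsplitProd : A1 * Ahi = ∏ j ∈ Finset.Ioc 0 L, f j ^ 2 := by
    rw [hA1, hAhi]
    exact Finset.prod_Ioc_consecutive _ (Nat.zero_le L1) (by omega)
  set Atot : ℝ := ∏ j ∈ Finset.Ioc 0 L, f j ^ 2 with hAtot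
  have hAtotnn : 0 ≤ Atot := Finset.prod_nonneg fun j _ => sq_nonneg _
  -- compute D
  have hcardhi : (Finset.Ioc L1 L).card = L2 := by
    rw [Nat.card_Ioc]; omega
  have hD : ∏ j ∈ Finset.Ioc L1 L, (f j ^ 2 / K) ^ K = (Ahi / (K:ℝ) ^ L2) ^ K := by
    rw [Finset.prod_pow]
    congr 1
    rw [Finset.prod_div_distrib, Finset.prod_const, hcardhi, hAhi]
  have hDnn : 0 ≤ (Ahi / (K:ℝ) ^ L2) ^ K := by positivity
  set R : ℝ := Real.exp ((1 / 2) * (c + (L1 : ℝ) * K * Real.log K - 2 * K * Real.log (t0 / x)))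
    with hR
  have hRpos : 0 < R := Real.exp_pos _
  -- square both sides
  set LHS : ℝ := Real.sqrt (∏ j ∈ Finset.Ioc L1 L, (f j ^ 2 / K) ^ K) * (Pf * x / t0) ^ K
    with hLHS
  have hLHSnn : 0 ≤ LHS := by
    apply mul_nonneg (Real.sqrt_nonneg _)
    positivity
  suffices hsq : LHS ^ 2 ≤ R ^ 2 by
    calc LHS = Real.sqrt (LHS ^ 2) := (Real.sqrt_sq hLHSnn).symm
      _ ≤ Real.sqrt (R ^ 2) := Real.sqrt_le_sqrt hsq
      _ = R := Real.sqrt_sq hRpos.le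
  -- compute LHS^2
  have hLHSsq : LHS ^ 2 = (Ahi / (K:ℝ) ^ L2) ^ K * (A1 * x ^ 2 / t0 ^ 2) ^ K := by
    rw [hLHS, mul_pow, Real.sq_sqrt (by positivity), hD]
    congr 1
    rw [← pow_mul, mul_comm K 2, pow_mul, div_pow, mul_pow, hPfsq]
  have hcombine : (Ahi / (K:ℝ) ^ L2) ^ K * (A1 * x ^ 2 / t0 ^ 2) ^ K
      = (Atot * x ^ 2 / ((K:ℝ) ^ L2 * t0 ^ 2)) ^ K := by
    rw [← mul_pow]
    congr 1
    rw [← hsplitProd]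
    field_simp
  rw [hLHSsq, hcombine]
  -- compute R^2
  have hRsq : R ^ 2 = Real.exp (c + (L1 : ℝ) * K * Real.log K - 2 * K * Real.log (t0 / x)) := by
    rw [hR, ← Real.exp_nat_mul]
    congr 1
    push_cast
    ring
  rw [hRsq]
  -- AM-GM for Atot
  have hcardL : (Finset.Ioc 0 L).card = L := by rw [Nat.card_Ioc]; omega
  have hmean_nn : ∀ j ∈ Finset.Ioc 0 L, (0:ℝ) ≤ f j ^ 2 := fun j _ => sq_nonneg _
  have hw : ∀ j ∈ Finset.Ioc 0 L, (0:ℝ) ≤ (L:ℝ)⁻¹ := fun _ _ => by positivity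
  have hw1 : ∑ _j ∈ Finset.Ioc 0 L, (L:ℝ)⁻¹ = 1 := by
    rw [Finset.sum_const, hcardL, nsmul_eq_mul]
    field_simp
  have hgm := Real.geom_mean_le_arith_mean_weighted (Finset.Ioc 0 L)
    (fun _ => (L:ℝ)⁻¹) (fun j => f j ^ 2) hw hw1 hmean_nn
  have hprod_rpow : ∏ j ∈ Finset.Ioc 0 L, (f j ^ 2) ^ ((L:ℝ)⁻¹) = Atot ^ ((L:ℝ)⁻¹) := by
    rw [← Real.finset_prod_rpow (Finset.Ioc 0 L) _ hmean_nn]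
  have hsum_eq : ∑ j ∈ Finset.Ioc 0 L, (L:ℝ)⁻¹ * f j ^ 2
      = (∑ j ∈ Finset.Ioc 0 L, f j ^ 2) / L := by
    rw [← Finset.mul_sum]; ring
  rw [hprod_rpow, hsum_eq] at hgm
  set μ : ℝ := ((L:ℝ) * K + c) / L with hμ
  have hgm2 : Atot ^ ((L:ℝ)⁻¹) ≤ μ := by
    apply le_trans hgm
    rw [hμ]
    exact div_le_div_of_nonneg_right hsum hLR.le
  have hμnn : 0 ≤ μ := le_trans (Real.rpow_nonneg hAtotnn _) hgm2
  have hAtot_le : Atot ≤ μ ^ L := by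
    have hfin : (Atot ^ ((L:ℝ)⁻¹)) ^ L ≤ μ ^ L :=
      pow_le_pow_left₀ (Real.rpow_nonneg hAtotnn _) hgm2 L
    rwa [← Real.rpow_natCast (Atot ^ ((L:ℝ)⁻¹)) L, ← Real.rpow_mul hAtotnn,
      inv_mul_cancel₀ (by exact_mod_cast hLpos.ne'), Real.rpow_one] at hfin
  set u : ℝ := c / ((L:ℝ) * K) with hu
  have hμ_eq : μ = (K:ℝ) * (1 + u) := by
    rw [hμ, hu]
    field_simp
  have hμle : μ ≤ (K:ℝ) * Real.exp u := by
    rw [hμ_eq]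
    apply mul_le_mul_of_nonneg_left _ hKR.le
    linarith [Real.add_one_le_exp u]
  have hAtot2 : Atot ≤ ((K:ℝ) * Real.exp u) ^ L :=
    le_trans hAtot_le (pow_le_pow_left₀ hμnn hμle L)
  -- final chain
  have hbase_nn : (0:ℝ) ≤ Atot * x ^ 2 / ((K:ℝ) ^ L2 * t0 ^ 2) := by positivity
  have hstep : (Atot * x ^ 2 / ((K:ℝ) ^ L2 * t0 ^ 2)) ^ K
      ≤ (((K:ℝ) * Real.exp u) ^ L * x ^ 2 / ((K:ℝ) ^ L2 * t0 ^ 2)) ^ K := by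
    apply pow_le_pow_left₀ hbase_nn
    apply div_le_div_of_nonneg_right _ (by positivity)
    exact mul_le_mul_of_nonneg_right hAtot2 (sq_nonneg x)
  refine le_trans hstep (le_of_eq ?_)
  -- now show exact equality with the exponential
  have eu : (L:ℝ) * u = c / K := by
    rw [hu]; field_simp
  have e1 : ((K:ℝ) * Real.exp u) ^ L = (K:ℝ) ^ L * Real.exp (c / K) := by
    rw [mul_pow, ← Real.exp_nat_mul, eu]
  have e2 : (K:ℝ) ^ L = (K:ℝ) ^ L1 * (K:ℝ) ^ L2 := by
    rw [hL, pow_add]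
  have hK2pos : (0:ℝ) < (K:ℝ) ^ L2 := by positivity
  have e3 : ((K:ℝ) * Real.exp u) ^ L * x ^ 2 / ((K:ℝ) ^ L2 * t0 ^ 2)
      = (K:ℝ) ^ L1 * Real.exp (c / K) * (x / t0) ^ 2 := by
    rw [e1, e2, div_pow]
    field_simp
  rw [e3]
  have e4 : (K:ℝ) ^ L1 = Real.exp ((L1:ℝ) * Real.log (K:ℝ)) := by
    rw [← Real.log_pow, Real.exp_log (by positivity)]
  have e5 : (x / t0) ^ 2 = Real.exp (2 * Real.log (x / t0)) := by
    rw [show (2:ℝ) * Real.log (x / t0) = Real.log ((x / t0) ^ 2) by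
      rw [Real.log_pow]; push_cast; ring]
    rw [Real.exp_log (by positivity)]
  rw [e4, e5, ← Real.exp_add, ← Real.exp_add, ← Real.exp_nat_mul]
  congr 1
  have e6 : Real.log (x / t0) = - Real.log (t0 / x) := by
    rw [Real.log_div hx.ne' ht0.ne', Real.log_div ht0.ne' hx.ne']
    ring
  rw [e6]
  field_simp
  ring

end SP
end PartG2

set_option maxHeartbeats 1000000 in
open SP in
/-- Proposition 5.1: approximate interpolation and bounded parameter norm
imply bounded conditioning of the product of the linear layers. -/
theorem statement12
    (L1 L2 L : ℕ) (hL1 : 1 ≤ L1) (hL2 : 1 ≤ L2) (hLdef : L = L1 + L2)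
    (n : ℕ → ℕ) (N K : ℕ) (hK : n L = K)
    (σ : ℝ → ℝ)
    (hσ : ∀ x : ℝ, |σ x| ≤ |x|)
    (W : ∀ ℓ : ℕ, Matrix (Fin (n ℓ)) (Fin (n (ℓ - 1))) ℝ)
    (X : Matrix (Fin (n 0)) (Fin N) ℝ)
    (hX : 0 < opNorm X)
    (Y : Matrix (Fin (n L)) (Fin N) ℝ)
    (cls : Fin N → Fin (n L))
    (hY : ∀ i j, Y i j = if i = cls j then 1 else 0)
    (Z : ∀ ℓ : ℕ, Matrix (Fin (n ℓ)) (Fin N) ℝ)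
    (hZ0 : Z 0 = X)
    (hZnl : ∀ ℓ, 1 ≤ ℓ → ℓ ≤ L1 → Z ℓ = (W ℓ * Z (ℓ - 1)).map σ)
    (hZlin : ∀ ℓ, L1 + 1 ≤ ℓ → ℓ ≤ L → Z ℓ = W ℓ * Z (ℓ - 1))
    -- partial products of the linear head: G ℓ = W_L ⋯ W_{ℓ+1}
    (G : ∀ ℓ : ℕ, Matrix (Fin (n L)) (Fin (n ℓ)) ℝ)
    (hGL : G L = 1)
    (hGrec : ∀ ℓ, L1 ≤ ℓ → ℓ < L → G ℓ = G (ℓ + 1) * W (ℓ + 1))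
    (ε1 c : ℝ)
    -- approximate interpolation
    (hA1 : frobNorm (Z L - Y) ≤ ε1)
    (hε1 : ε1 < sval Y K)
    -- bounded parameters
    (hθ : ∑ ℓ ∈ Finset.Icc 1 L, frobNorm (W ℓ) ^ 2 ≤ (L : ℝ) * K + c) :
    kappa (G L1) ≤
      Real.exp ((1 / 2) * (c + (L1 : ℝ) * K * Real.log K -
        2 * K * Real.log ((sval Y K - ε1) / opNorm X))) := by
  classical
  subst hK
  have hε1nn : 0 ≤ ε1 := le_trans (frobNorm_nonneg _) hA1
  have hsY : 0 < sval Y (n L) := lt_of_le_of_lt hε1nn hε1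
  have hKN : n L - 1 < N := by
    by_contra h
    rw [sval, dif_neg h] at hsY
    exact lt_irrefl 0 hsY
  have hsY_eq : sval Y (n L) = svals Y ⟨n L - 1, hKN⟩ := by rw [sval, dif_pos hKN]
  have hNpos : 0 < N := by omega
  have hKpos : 0 < n L := (cls ⟨0, hNpos⟩).pos
  have hL1L : L1 ≤ L := by omega
  -- factorization of the network
  have hfac : ∀ d ℓ, L1 ≤ ℓ → ℓ + d = L → Z L = G ℓ * Z ℓ := by
    intro d
    induction d with
    | zero =>
      intro ℓ hℓ1 hℓ2
      have hl : ℓ = L := by omega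
      subst hl
      rw [hGL, Matrix.one_mul]
    | succ d ih =>
      intro ℓ hℓ1 hℓ2
      have h1 := ih (ℓ + 1) (by omega) (by omega)
      have h2 := hZlin (ℓ + 1) (by omega) (by omega)
      have h3 := hGrec ℓ hℓ1 (by omega)
      rw [h3, h1, h2]
      exact (Matrix.mul_assoc _ _ _).symm
  have hZL : Z L = G L1 * Z L1 := hfac (L - L1) L1 le_rfl (by omega)
  -- Weyl perturbation
  have hweyl : svals Y ⟨n L - 1, hKN⟩ - ε1 ≤ svals (Z L) ⟨n L - 1, hKN⟩ := by
    have h := weyl_svals (Z L) Y hKN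
    linarith [h, hA1]
  set t0 : ℝ := sval Y (n L) - ε1 with ht0def
  have ht0 : 0 < t0 := by rw [ht0def]; linarith [hε1]
  have ht0le : t0 ≤ svals (G L1 * Z L1) ⟨n L - 1, hKN⟩ := by
    rw [← hZL, ht0def, hsY_eq]
    exact hweyl
  -- positivity of the hidden representation
  set ZF : ℝ := frobNorm (Z L1) with hZFdef
  have hZFnn : 0 ≤ ZF := frobNorm_nonneg _
  have hZFpos : 0 < ZF := by
    rcases lt_or_eq_of_le hZFnn with h | h
    · exact h
    · exfalso
      have h0 : Z L1 = 0 := frobNorm_eq_zero h.symm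
      rw [h0, Matrix.mul_zero] at ht0le
      rw [svals_zero_matrix] at ht0le
      linarith
  have hBact : ∀ v : Fin N → ℝ, ‖EN ((Z L1) *ᵥ v)‖ ≤ ZF * ‖EN v‖ := fun v =>
    norm_mulVec_le_frob _ v
  obtain ⟨hKn1, hsig⟩ := svals_factor (G L1) (Z L1) hKN ht0 hZFpos hBact ht0le
  -- bound on the hidden representation norm
  set x : ℝ := opNorm X with hxdef
  have hZb : ∀ ℓ, 1 ≤ ℓ → ℓ ≤ L1 →
      frobNorm (Z ℓ) ≤ (∏ j ∈ Finset.Ioc 0 ℓ, frobNorm (W j)) * x := by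
    intro ℓ hℓ1
    induction ℓ, hℓ1 using Nat.le_induction with
    | base =>
      intro hle
      have hZ1 : Z 1 = (W 1 * Z 0).map σ := hZnl 1 le_rfl hL1
      have hIoc : Finset.Ioc 0 1 = {1} := rfl
      rw [hIoc, Finset.prod_singleton, hZ1, hZ0]
      calc frobNorm ((W 1 * X).map σ) ≤ frobNorm (W 1 * X) := frobNorm_map_le _ σ hσ
        _ ≤ frobNorm (W 1) * opNorm X := frobNorm_mul_opNorm_le _ _
    | succ ℓ hℓ ih =>
      intro hle
      have hZn := hZnl (ℓ + 1) (by omega) hle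
      have hP := ih (by omega)
      have hsucc : ∏ j ∈ Finset.Ioc 0 (ℓ + 1), frobNorm (W j)
          = (∏ j ∈ Finset.Ioc 0 ℓ, frobNorm (W j)) * frobNorm (W (ℓ + 1)) :=
        Finset.prod_Ioc_succ_top (Nat.zero_le ℓ) _
      rw [hZn, hsucc]
      calc frobNorm ((W (ℓ + 1) * Z (ℓ + 1 - 1)).map σ)
          ≤ frobNorm (W (ℓ + 1) * Z (ℓ + 1 - 1)) := frobNorm_map_le _ σ hσ
        _ ≤ frobNorm (W (ℓ + 1)) * frobNorm (Z (ℓ + 1 - 1)) := frobNorm_mul_le _ _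
        _ = frobNorm (W (ℓ + 1)) * frobNorm (Z ℓ) := rfl
        _ ≤ frobNorm (W (ℓ + 1)) * ((∏ j ∈ Finset.Ioc 0 ℓ, frobNorm (W j)) * x) :=
            mul_le_mul_of_nonneg_left hP (frobNorm_nonneg _)
        _ = (∏ j ∈ Finset.Ioc 0 ℓ, frobNorm (W j)) * frobNorm (W (ℓ + 1)) * x := by ring
  set Pf : ℝ := ∏ j ∈ Finset.Ioc 0 L1, frobNorm (W j) with hPfdef
  have hZF_le : ZF ≤ Pf * x := hZb L1 hL1 le_rfl
  have hPfx_pos : 0 < Pf * x := lt_of_lt_of_le hZFpos hZF_le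
  -- determinant chain bound
  have hdetG : ∀ d ℓ, L1 ≤ ℓ → ℓ + d = L →
      Matrix.det (G ℓ * (G ℓ)ᵀ)
        ≤ ∏ j ∈ Finset.Ioc ℓ L, (frobNorm (W j) ^ 2 / (n L : ℝ)) ^ (n L) := by
    intro d
    induction d with
    | zero =>
      intro ℓ h1 h2
      have hl : ℓ = L := by omega
      subst hl
      rw [hGL, Matrix.transpose_one, Matrix.mul_one, Matrix.det_one, Finset.Ioc_self,
        Finset.prod_empty]
    | succ d ih =>
      intro ℓ h1 h2
      have hg := hGrec ℓ h1 (by omega)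
      have hstep := det_contraction hKpos (G (ℓ + 1)) (W (ℓ + 1))
      have hih := ih (ℓ + 1) (by omega) (by omega)
      have hprodsplit : ∏ j ∈ Finset.Ioc ℓ L, (frobNorm (W j) ^ 2 / (n L : ℝ)) ^ (n L)
          = (frobNorm (W (ℓ + 1)) ^ 2 / (n L : ℝ)) ^ (n L)
            * ∏ j ∈ Finset.Ioc (ℓ + 1) L, (frobNorm (W j) ^ 2 / (n L : ℝ)) ^ (n L) := by
        rw [← Finset.Icc_add_one_left_eq_Ioc, ← Finset.Ico_add_one_right_eq_Icc,
          Finset.prod_eq_prod_Ico_succ_bot (by omega : ℓ + 1 < L + 1),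
          Finset.Ico_add_one_right_eq_Icc, Finset.Icc_add_one_left_eq_Ioc]
      rw [hg, hprodsplit]
      calc Matrix.det ((G (ℓ + 1) * W (ℓ + 1)) * (G (ℓ + 1) * W (ℓ + 1))ᵀ)
          ≤ Matrix.det (G (ℓ + 1) * (G (ℓ + 1))ᵀ)
              * (frobNorm (W (ℓ + 1)) ^ 2 / (n L : ℝ)) ^ (n L) := hstep
        _ ≤ (∏ j ∈ Finset.Ioc (ℓ + 1) L, (frobNorm (W j) ^ 2 / (n L : ℝ)) ^ (n L))
              * (frobNorm (W (ℓ + 1)) ^ 2 / (n L : ℝ)) ^ (n L) :=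
            mul_le_mul_of_nonneg_right hih (by positivity)
        _ = (frobNorm (W (ℓ + 1)) ^ 2 / (n L : ℝ)) ^ (n L)
              * ∏ j ∈ Finset.Ioc (ℓ + 1) L, (frobNorm (W j) ^ 2 / (n L : ℝ)) ^ (n L) := by
            ring
  have hdetM : Matrix.det (G L1 * (G L1)ᵀ)
      ≤ ∏ j ∈ Finset.Ioc L1 L, (frobNorm (W j) ^ 2 / (n L : ℝ)) ^ (n L) :=
    hdetG (L - L1) L1 le_rfl (by omega)
  -- apply kappa bound
  have hs_pos : 0 < t0 / (Pf * x) := div_pos ht0 hPfx_pos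
  have hs_le : t0 / (Pf * x) ≤ svals (G L1) ⟨n L - 1, hKn1⟩ :=
    le_trans (div_le_div_of_nonneg_left ht0.le hZFpos hZF_le) hsig
  have hkb := kappa_bound (G L1) hKpos hKn1 hs_pos hs_le
  apply le_trans hkb
  -- convert the division and conclude with the numeric lemma
  have hdiv : Real.sqrt (Matrix.det (G L1 * (G L1)ᵀ)) / (t0 / (Pf * x)) ^ (n L)
      = Real.sqrt (Matrix.det (G L1 * (G L1)ᵀ)) * (Pf * x / t0) ^ (n L) := by
    rw [div_eq_mul_inv, ← inv_pow, inv_div]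
  rw [hdiv]
  have hsqrt_le : Real.sqrt (Matrix.det (G L1 * (G L1)ᵀ))
      ≤ Real.sqrt (∏ j ∈ Finset.Ioc L1 L, (frobNorm (W j) ^ 2 / (n L : ℝ)) ^ (n L)) :=
    Real.sqrt_le_sqrt hdetM
  have hsum' : ∑ j ∈ Finset.Ioc 0 L, frobNorm (W j) ^ 2 ≤ (L : ℝ) * (n L) + c := by
    have h := hθ
    rwa [show Finset.Icc 1 L = Finset.Ioc 0 L from Finset.Icc_add_one_left_eq_Ioc 0 L] at h
  have hnum := numeric_final hL1 hL2 hLdef hKpos (fun j => frobNorm (W j))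
    (fun j => frobNorm_nonneg _) c t0 x ht0 hX hsum'
  calc Real.sqrt (Matrix.det (G L1 * (G L1)ᵀ)) * (Pf * x / t0) ^ (n L)
      ≤ Real.sqrt (∏ j ∈ Finset.Ioc L1 L, (frobNorm (W j) ^ 2 / (n L : ℝ)) ^ (n L))
          * (Pf * x / t0) ^ (n L) :=
        mul_le_mul_of_nonneg_right hsqrt_le (pow_nonneg (le_of_lt (div_pos hPfx_pos ht0)) _)
    _ ≤ Real.exp ((1 / 2) * (c + (L1 : ℝ) * (n L) * Real.log (n L)
          - 2 * (n L) * Real.log (t0 / x))) := hnum
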